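/- Let d ≥ 3 and 1 ≤ d' < d. Define γ(θ; u_{-d'}) = Σ_{1 ≤ d'' ≤ d, d'' ≠ d'} u_{d''} θ^{d''}/(d'')!, with parameters u_{-d'} = (u₁,…,u_{d'-1}, u_{d'+1},…,u_d) ∈ ℝ^{d-1}. If u_{d'+1} ≠ 0, then γ satisfies the (d−1)-parameter cinematic curvature condition at every point (θ; u_{-d'}) with θ = 0. -/

import Mathlib

/-- The curve `γ(θ; u_{-d'}) = ∑_{1 ≤ k ≤ d, k ≠ d'} u_k θ^k / k!`. -/
noncomputable def gammaMinus (d d' : ℕ) (u : ℕ → ℝ) (θ : ℝ) : ℝ :=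
  ∑ k ∈ Finset.Icc 1 d, (if k = d' then 0 else u k) * θ ^ k / (Nat.factorial k : ℝ)

lemma iteratedDeriv_polyEval (p : Polynomial ℝ) (n : ℕ) :
    ∀ x : ℝ, iteratedDeriv n (fun x => p.eval x) x = (Polynomial.derivative^[n] p).eval x := by
  induction n with
  | zero => simp
  | succ n ih =>
    intro x
    rw [iteratedDeriv_succ, Function.iterate_succ_apply']
    have : deriv (iteratedDeriv n fun x => p.eval x) x
        = deriv (fun x => (Polynomial.derivative^[n] p).eval x) x := by
      apply Filter.EventuallyEq.deriv_eq
      exact Filter.Eventually.of_forall ih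
    rw [this, Polynomial.deriv]

lemma gamma_iter (d d' n : ℕ) (u : ℕ → ℝ) (hn : 1 ≤ n) :
    iteratedDeriv n (gammaMinus d d' u) 0 =
      if n ≤ d then (if n = d' then 0 else u n) else 0 := by
  set c : ℕ → ℝ := fun k => if k = d' then 0 else u k with hc
  have hg : gammaMinus d d' u = fun θ =>
      (∑ k ∈ Finset.Icc 1 d,
        Polynomial.C (c k / (Nat.factorial k : ℝ)) * Polynomial.X ^ k).eval θ := by
    funext θ
    rw [Polynomial.eval_finset_sum]
    exact Finset.sum_congr rfl fun k _ => by
      rw [Polynomial.eval_mul, Polynomial.eval_C, Polynomial.eval_pow, Polynomial.eval_X]; ring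
  rw [hg, iteratedDeriv_polyEval _ n 0, ← Polynomial.coeff_zero_eq_eval_zero,
    Polynomial.coeff_iterate_derivative]
  rw [Polynomial.finset_sum_coeff]
  simp only [Polynomial.coeff_C_mul, Polynomial.coeff_X_pow, zero_add,
    Nat.descFactorial_self, mul_ite, mul_one, mul_zero]
  rw [Finset.sum_ite_eq (Finset.Icc 1 d) n (fun k => c k / (Nat.factorial k : ℝ))]
  by_cases h : n ≤ d
  · rw [if_pos (by simp [Finset.mem_Icc]; omega), if_pos h]
    rw [nsmul_eq_mul]
    field_simp
    rfl
  · rw [if_neg (by simp [Finset.mem_Icc]; omega), if_neg h, smul_zero]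

/-- The column-reordering permutation. -/
def rhoPerm (d d' : ℕ) (h1 : 1 ≤ d') (h2 : d' < d) : Equiv.Perm (Fin d) where
  toFun j := if j.1 = 0 then ⟨d' - 1, by omega⟩ else
    if j.1 < d' then ⟨j.1 - 1, by omega⟩ else j
  invFun i := if i.1 + 1 = d' then ⟨0, by omega⟩ else
    if hi : i.1 + 1 < d' then ⟨i.1 + 1, by omega⟩ else i
  left_inv := by
    intro j
    apply Fin.ext
    have hj := j.2
    simp only
    split_ifs <;> simp_all <;> omega
  right_inv := by
    intro i
    apply Fin.ext
    have hi := i.2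
    simp only
    split_ifs <;> simp_all <;> omega

lemma rhoPerm_apply_val (d d' : ℕ) (h1 : 1 ≤ d') (h2 : d' < d) (j : Fin d) :
    ((rhoPerm d d' h1 h2) j).1
      = if j.1 = 0 then d' - 1 else if j.1 < d' then j.1 - 1 else j.1 := by
  simp only [rhoPerm, Equiv.coe_fn_mk]
  split_ifs <;> rfl


/-- for `d ≥ 3`, `1 ≤ d' < d`, if `u_{d'+1} ≠ 0` then `γ(θ; u_{-d'})`
satisfies the `(d-1)`-parameter cinematic curvature condition at every point with `θ = 0`:
the `d × d` matrix whose first column is `∂T/∂θ` and whose remaining columns are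
`∂T/∂u_k` for `k ∈ {1,…,d} \ {d'}` (where `T = (∂_θ γ, …, ∂_θ^d γ)ᵀ`) has nonzero
determinant. -/
theorem stmt_1 (d d' : ℕ) (hd : 3 ≤ d) (h1 : 1 ≤ d') (h2 : d' < d)
    (u : ℕ → ℝ) (hu : u (d' + 1) ≠ 0) :
    (Matrix.of fun i j : Fin d =>
      if j.1 = 0 then
        deriv (fun t : ℝ => iteratedDeriv (i.1 + 1) (gammaMinus d d' u) t) 0
      else
        deriv (fun a : ℝ =>
            iteratedDeriv (i.1 + 1)
              (gammaMinus d d' (Function.update u (if j.1 < d' then j.1 else j.1 + 1) a)) 0)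
          (u (if j.1 < d' then j.1 else j.1 + 1))).det ≠ 0 := by
  set ρ := rhoPerm d d' h1 h2 with hρ
  set c : Fin d → ℝ := fun i =>
    if i.1 + 2 ≤ d then (if i.1 + 2 = d' then 0 else u (i.1 + 2)) else 0 with hcdef
  set k0 : Fin d := ⟨d' - 1, by omega⟩ with hk0
  set N := (1 : Matrix (Fin d) (Fin d) ℝ).updateCol k0 c with hN
  have hM : (Matrix.of fun i j : Fin d =>
      if j.1 = 0 then
        deriv (fun t : ℝ => iteratedDeriv (i.1 + 1) (gammaMinus d d' u) t) 0
      else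
        deriv (fun a : ℝ =>
            iteratedDeriv (i.1 + 1)
              (gammaMinus d d' (Function.update u (if j.1 < d' then j.1 else j.1 + 1) a)) 0)
          (u (if j.1 < d' then j.1 else j.1 + 1))) = N.submatrix id ρ := by
    ext i j
    rw [Matrix.submatrix_apply, Matrix.of_apply, id_eq]
    by_cases hj0 : j.1 = 0
    · rw [if_pos hj0]
      have hρj : ρ j = k0 := by
        apply Fin.ext
        rw [hρ, rhoPerm_apply_val, if_pos hj0]
      rw [hρj, hN, Matrix.updateCol_self]
      have hder : deriv (fun t : ℝ => iteratedDeriv (i.1 + 1) (gammaMinus d d' u) t) 0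
          = iteratedDeriv (i.1 + 2) (gammaMinus d d' u) 0 :=
        (congrFun (iteratedDeriv_succ (n := i.1 + 1) (f := gammaMinus d d' u)) 0).symm
      rw [hder, gamma_iter d d' (i.1 + 2) u (by omega), hcdef]
    · rw [if_neg hj0]
      set m : ℕ := if j.1 < d' then j.1 else j.1 + 1 with hm
      have hm1 : 1 ≤ m := by simp only [hm]; split_ifs <;> omega
      have hmd : m ≤ d := by
        have := j.2; simp only [hm]; split_ifs <;> omega
      have hmd' : m ≠ d' := by simp only [hm]; split_ifs <;> omega
      have hfun : (fun a : ℝ =>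
          iteratedDeriv (i.1 + 1) (gammaMinus d d' (Function.update u m a)) 0)
          = fun a : ℝ => if i.1 + 1 = d' then 0 else if i.1 + 1 = m then a else u (i.1 + 1) := by
        funext a
        rw [gamma_iter d d' (i.1 + 1) _ (by omega), if_pos (by have := i.2; omega)]
        by_cases h : i.1 + 1 = d'
        · rw [if_pos h, if_pos h]
        · rw [if_neg h, if_neg h, Function.update_apply]
      rw [hfun]
      have hρval : (ρ j).1 = m - 1 := by
        rw [hρ, rhoPerm_apply_val, if_neg hj0, hm]
        split_ifs <;> omega
      have hρj : ρ j ≠ k0 := by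
        intro hcon
        have := congrArg Fin.val hcon
        rw [hρval, hk0] at this
        simp only [hm] at this hmd'
        split_ifs at this <;> omega
      rw [hN, Matrix.updateCol_ne hρj, Matrix.one_apply]
      have hiff : i = ρ j ↔ i.1 + 1 = m := by
        rw [Fin.ext_iff, hρval]
        omega
      by_cases h' : i.1 + 1 = d'
      · rw [if_neg (fun hc => absurd (hiff.mp hc) (by omega))]
        simp only [if_pos h']
        exact deriv_const _ _
      · by_cases h : i.1 + 1 = m
        · rw [if_pos (hiff.mpr h)]
          simp only [if_neg h', if_pos h]
          simp
        · rw [if_neg (fun hc => h (hiff.mp hc))]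
          simp only [if_neg h', if_neg h]
          exact deriv_const _ _
  rw [hM, Matrix.det_permute']
  have hNdet : N.det = c k0 := by
    have hcr := Matrix.cramer_apply (1 : Matrix (Fin d) (Fin d) ℝ) c k0
    rw [Matrix.cramer_one] at hcr
    rw [hN, ← hcr]
    rfl
  have hck0 : c k0 = u (d' + 1) := by
    simp only [hcdef, hk0]
    rw [if_pos (by omega), if_neg (by omega)]
    congr 1
    omega
  rw [hNdet, hck0]
  rcases Int.units_eq_one_or (Equiv.Perm.sign ρ) with h | h <;>
    simp [h, hu]
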